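/- (Explicit b_Λ and its ε-statistics) Let Λ correspond to non-negative integers (a₀, a₁, …, a_n) with Σ a_j = ℓ, and define b_Λ ∈ B^{i,ℓ} by (b_Λ)_{p,q} = a_{q - i + p} for 1 ≤ p ≤ i, i ≤ q ≤ n (so the (p,q)-entry is a_{p + q - i}, indices taken in {1,…,n} — concretely row p reads a_p, a_{p+1}, …, a_{p + n - i}). Then b_Λ satisfies all the defining lattice-path inequalities of B^{i,ℓ}, and ε_l(b_Λ) = a_l for every l = 0, 1, …, n. -/

import Mathlib

open Finset

/-- Matrices of the polytope model: entry `a p q` for row `p`, column `q`. -/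
abbrev Mat := ℕ → ℕ → ℕ

/-- A monotone lattice path `β(1) = (1,i), …, β(n) = (i,n)`: each step increases
the row or the column index by 1. -/
def IsPath (n i : ℕ) (β : ℕ → ℕ × ℕ) : Prop :=
  β 1 = (1, i) ∧ β n = (i, n) ∧
    ∀ s, 1 ≤ s → s < n →
      β (s + 1) = ((β s).1 + 1, (β s).2) ∨ β (s + 1) = ((β s).1, (β s).2 + 1)

/-- Membership in the Kirillov–Reshetikhin polytope `B^{i,m}` of type `A_n^{(1)}`:
non-negative integer matrices indexed by `1 ≤ p ≤ i`, `i ≤ q ≤ n` (zero outside),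
all of whose monotone lattice-path sums are at most `m`. -/
def MemKR (n i m : ℕ) (a : Mat) : Prop :=
  (∀ p q, ¬(1 ≤ p ∧ p ≤ i ∧ i ≤ q ∧ q ≤ n) → a p q = 0) ∧
  ∀ β : ℕ → ℕ × ℕ, IsPath n i β → ∑ s ∈ Icc 1 n, a (β s).1 (β s).2 ≤ m

/-- The set of maximizers of `F` on `S`. -/
def maximizers (S : Finset ℕ) (F : ℕ → ℕ) : Finset ℕ :=
  S.filter fun q => ∀ q' ∈ S, F q' ≤ F q

/-- Smallest maximizer. -/
def argmaxLow (S : Finset ℕ) (F : ℕ → ℕ) : ℕ := (maximizers S F).min.untopD 0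

/-- Largest maximizer. -/
def argmaxHigh (S : Finset ℕ) (F : ℕ → ℕ) : ℕ := (maximizers S F).max.unbotD 0

/-- For `l > i`: `G(q) = Σ_{j=1}^q a_{j,l-1} + Σ_{j=q}^i a_{j,l}`. -/
def Gplus (i : ℕ) (a : Mat) (l q : ℕ) : ℕ :=
  ∑ j ∈ Icc 1 q, a j (l - 1) + ∑ j ∈ Icc q i, a j l

/-- For `l < i`: `F(q) = Σ_{j=i}^q a_{l,j} + Σ_{j=q}^n a_{l+1,j}`. -/
def Fminus (n i : ℕ) (a : Mat) (l q : ℕ) : ℕ :=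
  ∑ j ∈ Icc i q, a l j + ∑ j ∈ Icc q n, a (l + 1) j

def pPlus (i : ℕ) (a : Mat) (l : ℕ) : ℕ := argmaxLow (Icc 1 i) (Gplus i a l)
def qPlus (i : ℕ) (a : Mat) (l : ℕ) : ℕ := argmaxHigh (Icc 1 i) (Gplus i a l)
def pMinus (n i : ℕ) (a : Mat) (l : ℕ) : ℕ := argmaxHigh (Icc i n) (Fminus n i a l)
def qMinus (n i : ℕ) (a : Mat) (l : ℕ) : ℕ := argmaxLow (Icc i n) (Fminus n i a l)

/-- The statistic `φ_l` of the polytope model (`l = 0` is the affine one). -/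
def phi (n i m : ℕ) (a : Mat) (l : ℕ) : ℤ :=
  if l = 0 then (a 1 n : ℤ)
  else if l = i then
    (m : ℤ) - ∑ j ∈ Icc 1 (i - 1), (a j i : ℤ) - ∑ j ∈ Icc i n, (a i j : ℤ)
  else if i < l then
    ∑ j ∈ Icc 1 (pPlus i a l), (a j (l - 1) : ℤ)
      - ∑ j ∈ Icc 1 (pPlus i a l - 1), (a j l : ℤ)
  else
    ∑ j ∈ Icc (pMinus n i a l) n, (a (l + 1) j : ℤ)
      - ∑ j ∈ Icc (pMinus n i a l + 1) n, (a l j : ℤ)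

/-- The statistic `ε_l` of the polytope model (`l = 0` is the affine one). -/
def eps (n i m : ℕ) (a : Mat) (l : ℕ) : ℤ :=
  if l = 0 then
    (m : ℤ) - ∑ j ∈ Icc i n, (a 1 j : ℤ) - ∑ j ∈ Icc 2 n, (a j n : ℤ)
  else if l = i then (a i i : ℤ)
  else if i < l then
    ∑ j ∈ Icc (qPlus i a l) i, (a j l : ℤ)
      - ∑ j ∈ Icc (qPlus i a l + 1) i, (a j (l - 1) : ℤ)
  else
    ∑ j ∈ Icc i (qMinus n i a l), (a l j : ℤ)
      - ∑ j ∈ Icc i (qMinus n i a l - 1), (a (l + 1) j : ℤ)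

/-- Update one entry of a matrix. -/
def upd (a : Mat) (p q v : ℕ) : Mat :=
  fun p' q' => if p' = p ∧ q' = q then v else a p' q'

/-- The Kashiwara raising operator `ẽ_l` on `B^{i,m}` (`l = 0` affine). -/
def eOp (n i m : ℕ) (a : Mat) (l : ℕ) : Option Mat :=
  if eps n i m a l ≤ 0 then none
  else some (
    if l = 0 then upd a 1 n (a 1 n + 1)
    else if l = i then upd a i i (a i i - 1)
    else if i < l then
      upd (upd a (qPlus i a l) (l - 1) (a (qPlus i a l) (l - 1) + 1))
        (qPlus i a l) l (a (qPlus i a l) l - 1)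
    else
      upd (upd a l (qMinus n i a l) (a l (qMinus n i a l) - 1))
        (l + 1) (qMinus n i a l) (a (l + 1) (qMinus n i a l) + 1))

/-- The Kashiwara lowering operator `f̃_l` on `B^{i,m}` (`l = 0` affine). -/
def fOp (n i m : ℕ) (a : Mat) (l : ℕ) : Option Mat :=
  if phi n i m a l ≤ 0 then none
  else some (
    if l = 0 then upd a 1 n (a 1 n - 1)
    else if l = i then upd a i i (a i i + 1)
    else if i < l then
      upd (upd a (pPlus i a l) (l - 1) (a (pPlus i a l) (l - 1) - 1))
        (pPlus i a l) l (a (pPlus i a l) l + 1)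
    else
      upd (upd a l (pMinus n i a l) (a l (pMinus n i a l) + 1))
        (l + 1) (pMinus n i a l) (a (l + 1) (pMinus n i a l) - 1))

/-- `ẽ_l` on the tensor product `B^{r₁,s₁} ⊗ B^{r₂,s₂}`. -/
def eTen (n r₁ s₁ r₂ s₂ l : ℕ) (x : Mat × Mat) : Option (Mat × Mat) :=
  if phi n r₂ s₂ x.2 l < eps n r₁ s₁ x.1 l then
    (eOp n r₁ s₁ x.1 l).map fun a' => (a', x.2)
  else (eOp n r₂ s₂ x.2 l).map fun b' => (x.1, b')

/-- `f̃_l` on the tensor product `B^{r₁,s₁} ⊗ B^{r₂,s₂}`. -/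
def fTen (n r₁ s₁ r₂ s₂ l : ℕ) (x : Mat × Mat) : Option (Mat × Mat) :=
  if phi n r₂ s₂ x.2 l ≤ eps n r₁ s₁ x.1 l then
    (fOp n r₁ s₁ x.1 l).map fun a' => (a', x.2)
  else (fOp n r₂ s₂ x.2 l).map fun b' => (x.1, b')

/-- Classical highest weight element of the tensor product. -/
def IsHW (n r₁ s₁ r₂ s₂ : ℕ) (x : Mat × Mat) : Prop :=
  ∀ l, 1 ≤ l → l ≤ n → eTen n r₁ s₁ r₂ s₂ l x = none

/-- Cartan matrix of type `A_n`: `⟨α_r, α_j^∨⟩`. -/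
def cartan (r j : ℕ) : ℤ :=
  if r = j then 2 else if r + 1 = j ∨ j + 1 = r then -1 else 0

/-- The pairing `⟨wt(A), α_j^∨⟩` where `wt(A) = m ω_i - Σ a_{p,q} α_{p,q}`,
and `α_{p,q} = α_p + ⋯ + α_q`. -/
def wtCoord (n i m : ℕ) (a : Mat) (j : ℕ) : ℤ :=
  (if j = i then (m : ℤ) else 0)
    - ∑ p ∈ Icc 1 i, ∑ q ∈ Icc i n, (a p q : ℤ) * ∑ r ∈ Icc p q, cartan r j

/-- The matrix `b^Λ` with `(p,q)`-entry `c ((p+q) mod (n+1))` on the index range. -/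
def bOf (n i : ℕ) (c : ℕ → ℕ) : Mat :=
  fun p q => if 1 ≤ p ∧ p ≤ i ∧ i ≤ q ∧ q ≤ n then c ((p + q) % (n + 1)) else 0


private lemma sum_Icc_top {M : Type*} [AddCommMonoid M] (f : ℕ → M) {a b : ℕ} (h : a ≤ b + 1) :
    ∑ j ∈ Icc a (b + 1), f j = (∑ j ∈ Icc a b, f j) + f (b + 1) := by
  rw [Icc_eq_cons_Ico h, sum_cons, Finset.Ico_add_one_right_eq_Icc, add_comm]

private lemma sum_Icc_bot {M : Type*} [AddCommMonoid M] (f : ℕ → M) {a b : ℕ} (h : a ≤ b) :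
    ∑ j ∈ Icc a b, f j = f a + ∑ j ∈ Icc (a + 1) b, f j := by
  rw [Icc_eq_cons_Ioc h, sum_cons, Finset.Icc_add_one_left_eq_Ioc]

private lemma max_Icc_eq {a b : ℕ} (h : a ≤ b) : (Icc a b).max = (b : WithBot ℕ) := by
  apply le_antisymm
  · exact Finset.max_le fun x hx => WithBot.coe_le_coe.mpr (mem_Icc.mp hx).2
  · exact Finset.le_max (mem_Icc.mpr ⟨h, le_refl b⟩)

private lemma min_Icc_eq {a b : ℕ} (h : a ≤ b) : (Icc a b).min = (a : WithTop ℕ) := by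
  apply le_antisymm
  · exact Finset.min_le (mem_Icc.mpr ⟨le_refl a, h⟩)
  · exact Finset.le_min fun x hx => WithTop.coe_le_coe.mpr (mem_Icc.mp hx).1

/-- for `Λ = (a₀,…,a_n)` of level `ℓ`, the matrix `b_Λ` with
`(p,q)`-entry `a_{p+q-i}` lies in `B^{i,ℓ}` and satisfies `ε_l(b_Λ) = a_l` for
all `l = 0,…,n`. -/
theorem stmt16 (n i ℓ : ℕ) (hi1 : 1 ≤ i) (hin : i ≤ n) (c : ℕ → ℕ)
    (hsum : ∑ j ∈ range (n + 1), c j = ℓ) :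
    MemKR n i ℓ
      (fun p q => if 1 ≤ p ∧ p ≤ i ∧ i ≤ q ∧ q ≤ n then c (p + q - i) else 0) ∧
    ∀ l, l ≤ n →
      eps n i ℓ
        (fun p q => if 1 ≤ p ∧ p ≤ i ∧ i ≤ q ∧ q ≤ n then c (p + q - i) else 0)
        l = c l := by
  set a : Mat := fun p q => if 1 ≤ p ∧ p ≤ i ∧ i ≤ q ∧ q ≤ n then c (p + q - i) else 0 with ha
  have haval : ∀ p q, 1 ≤ p → p ≤ i → i ≤ q → q ≤ n → a p q = c (p + q - i) := by
    intro p q h1 h2 h3 h4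
    simp only [ha, if_pos (⟨h1, h2, h3, h4⟩ : 1 ≤ p ∧ p ≤ i ∧ i ≤ q ∧ q ≤ n)]
  constructor
  · constructor
    · intro p q h
      simp only [ha, if_neg h]
    · intro β hβ
      obtain ⟨h1, hn, hstep⟩ := hβ
      have key : ∀ s, 1 ≤ s → s ≤ n → (β s).1 + (β s).2 = i + s := by
        intro s hs1
        induction s, hs1 using Nat.le_induction with
        | base => intro _; rw [h1]; show 1 + i = i + 1; omega
        | succ s hs ih =>
          intro hsn
          have ihv := ih (by omega)
          rcases hstep s hs (by omega) with h | h <;> rw [h] <;> simp <;> omega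
      have hle : ∀ s ∈ Icc 1 n, a (β s).1 (β s).2 ≤ c s := by
        intro s hs
        rw [mem_Icc] at hs
        by_cases hc : 1 ≤ (β s).1 ∧ (β s).1 ≤ i ∧ i ≤ (β s).2 ∧ (β s).2 ≤ n
        · rw [haval _ _ hc.1 hc.2.1 hc.2.2.1 hc.2.2.2]
          have hk := key s hs.1 hs.2
          have : (β s).1 + (β s).2 - i = s := by omega
          rw [this]
        · simp only [ha, if_neg hc]; exact Nat.zero_le _
      calc ∑ s ∈ Icc 1 n, a (β s).1 (β s).2 ≤ ∑ s ∈ Icc 1 n, c s :=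
            Finset.sum_le_sum hle
        _ ≤ ∑ j ∈ range (n + 1), c j := by
            apply Finset.sum_le_sum_of_subset
            intro x hx
            rw [mem_Icc] at hx; rw [mem_range]; omega
        _ = ℓ := hsum
  · intro l hln
    rcases Nat.eq_zero_or_pos l with hl0 | hl1
    · -- case l = 0
      subst hl0
      rw [eps, if_pos rfl]
      have N1 : ∑ j ∈ Icc i n, a 1 j = ∑ t ∈ Icc 1 (n + 1 - i), c t := by
        apply Finset.sum_nbij' (i := fun j => j + 1 - i) (j := fun t => t + i - 1)
        · intro x hx; rw [mem_Icc] at *; omega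
        · intro x hx; rw [mem_Icc] at *; omega
        · intro x hx; rw [mem_Icc] at hx; omega
        · intro x hx; rw [mem_Icc] at hx; omega
        · intro x hx; rw [mem_Icc] at hx
          rw [haval 1 x le_rfl hi1 hx.1 hx.2]
          exact congrArg c (by omega)
      have N2 : ∑ j ∈ Icc 2 n, a j n = ∑ t ∈ Icc (n + 2 - i) n, c t := by
        rw [← Finset.sum_subset (Finset.Icc_subset_Icc_right hin)
          (fun x hx hx' => by
            rw [mem_Icc] at hx; simp only [mem_Icc, not_and, not_le] at hx'
            simp only [ha]
            rw [if_neg]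
            rintro ⟨-, h2, -, -⟩
            exact absurd h2 (by omega))]
        apply Finset.sum_nbij' (i := fun j => j + n - i) (j := fun t => t + i - n)
        · intro x hx; rw [mem_Icc] at *; omega
        · intro x hx; rw [mem_Icc] at *; omega
        · intro x hx; rw [mem_Icc] at hx; omega
        · intro x hx; rw [mem_Icc] at hx; omega
        · intro x hx; rw [mem_Icc] at hx
          rw [haval x n (by omega) hx.2 hin le_rfl]
      have N3 : ∑ t ∈ Icc 1 (n + 1 - i), c t + ∑ t ∈ Icc (n + 2 - i) n, c t
          = ∑ t ∈ Icc 1 n, c t := by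
        rw [← Finset.Ico_add_one_right_eq_Icc 1 (n + 1 - i), ← Finset.Ico_add_one_right_eq_Icc (n + 2 - i) n,
          ← Finset.Ico_add_one_right_eq_Icc 1 n, show n + 1 - i + 1 = n + 2 - i by omega]
        exact Finset.sum_Ico_consecutive _ (by omega) (by omega)
      have N4 : c 0 + ∑ t ∈ Icc 1 n, c t = ℓ := by
        rw [← hsum, Finset.range_eq_Ico, ← Finset.Ico_add_one_right_eq_Icc 1 n]
        rw [← Finset.sum_Ico_consecutive c (by omega : 0 ≤ 1) (by omega : 1 ≤ n + 1)]
        congr 1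
      rw [← Nat.cast_sum, ← Nat.cast_sum, N1, N2]
      omega
    rcases Nat.lt_trichotomy l i with hlt | heq | hgt
    · -- case 1 ≤ l < i
      rw [eps, if_neg (by omega), if_neg (by omega), if_neg (by omega)]
      have hstep : ∀ q, i ≤ q → q < n →
          Fminus n i a l (q + 1) = Fminus n i a l q := by
        intro q hq1 hq2
        unfold Fminus
        have hv : a l (q + 1) = a (l + 1) q := by
          rw [haval l (q + 1) (by omega) (by omega) (by omega) (by omega),
            haval (l + 1) q (by omega) (by omega) (by omega) (by omega)]
          exact congrArg c (by omega)
        rw [sum_Icc_top (fun j => a l j) (by omega : i ≤ q + 1)]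
        conv_rhs => rw [sum_Icc_bot (fun j => a (l + 1) j) (by omega : q ≤ n)]
        rw [hv]; ring
      have hconst : ∀ q, i ≤ q → q ≤ n → Fminus n i a l q = Fminus n i a l i := by
        intro q hq1
        induction q, hq1 using Nat.le_induction with
        | base => intro _; rfl
        | succ q hq ih =>
          intro h
          rw [hstep q hq (by omega), ih (by omega)]
      have hmaxset : maximizers (Icc i n) (Fminus n i a l) = Icc i n := by
        apply Finset.filter_true_of_mem
        intro q hq q' hq'
        rw [mem_Icc] at hq hq'
        rw [hconst q hq.1 hq.2, hconst q' hq'.1 hq'.2]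
      have hqm : qMinus n i a l = i := by
        rw [qMinus, argmaxLow, hmaxset, min_Icc_eq hin]
        rfl
      rw [hqm, Finset.Icc_self, Finset.Icc_eq_empty (by omega : ¬ i ≤ i - 1),
        Finset.sum_singleton, Finset.sum_empty,
        haval l i (by omega) (by omega) le_rfl hin,
        show l + i - i = l by omega]
      ring
    · -- case l = i
      subst heq
      rw [eps, if_neg (by omega), if_pos rfl,
        haval l l hl1 le_rfl le_rfl hln, show l + l - l = l by omega]
    · -- case i < l
      rw [eps, if_neg (by omega), if_neg (by omega), if_pos hgt]
      have hstep : ∀ q, 1 ≤ q → q < i →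
          Gplus i a l (q + 1) = Gplus i a l q := by
        intro q hq1 hq2
        unfold Gplus
        have hv : a (q + 1) (l - 1) = a q l := by
          rw [haval (q + 1) (l - 1) (by omega) (by omega) (by omega) (by omega),
            haval q l (by omega) (by omega) (by omega) (by omega)]
          exact congrArg c (by omega)
        rw [sum_Icc_top (fun j => a j (l - 1)) (by omega : 1 ≤ q + 1)]
        conv_rhs => rw [sum_Icc_bot (fun j => a j l) (by omega : q ≤ i)]
        rw [hv]; ring
      have hconst : ∀ q, 1 ≤ q → q ≤ i → Gplus i a l q = Gplus i a l 1 := by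
        intro q hq1
        induction q, hq1 using Nat.le_induction with
        | base => intro _; rfl
        | succ q hq ih =>
          intro h
          rw [hstep q hq (by omega), ih (by omega)]
      have hmaxset : maximizers (Icc 1 i) (Gplus i a l) = Icc 1 i := by
        apply Finset.filter_true_of_mem
        intro q hq q' hq'
        rw [mem_Icc] at hq hq'
        rw [hconst q hq.1 hq.2, hconst q' hq'.1 hq'.2]
      have hqp : qPlus i a l = i := by
        rw [qPlus, argmaxHigh, hmaxset, max_Icc_eq hi1]
        rfl
      rw [hqp, Finset.Icc_self, Finset.Icc_eq_empty (by omega : ¬ i + 1 ≤ i),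
        Finset.sum_singleton, Finset.sum_empty,
        haval i l hi1 le_rfl (by omega) hln,
        show i + l - i = l by omega]
      ring
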